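/- Let F be a field and G a finite abelian group such that for every g ∈ G the field F contains a primitive (orderOf g)-th root of unity and the characteristic of F does not divide orderOf g. Then the F-algebra homomorphism Ψ : MonoidAlgebra F G →ₐ[F] ((G →* Fˣ) → F) determined by Ψ (single g 1) χ = χ g (for g ∈ G and characters χ : G →* Fˣ) is bijective. -/

import Mathlib

/-- If `F` has enough roots of unity for the finite abelian group `G`, then the algebra
homomorphism `MonoidAlgebra F G → ((G →* Fˣ) → F)`, `single g 1 ↦ (χ ↦ χ g)`, is
bijective. -/
theorem characterEval_bijective
    {F G : Type*} [Field F] [CommGroup G] [Finite G]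
    (hroot : ∀ g : G, ∃ ζ : F, IsPrimitiveRoot ζ (orderOf g))
    (hchar : ∀ g : G, ¬ (ringChar F ∣ orderOf g)) :
    Function.Bijective
      ⇑((MonoidAlgebra.lift F ((G →* Fˣ) → F) G)
        { toFun := fun g => fun χ : G →* Fˣ => ((χ g : Fˣ) : F)
          map_one' := by funext χ; simp
          map_mul' := fun g h => by funext χ; simp }) := by
  classical
  have : Fintype G := Fintype.ofFinite G
  -- F has enough roots of unity for the exponent of G
  haveI hexp : HasEnoughRootsOfUnity F (Monoid.exponent G) := by
    obtain ⟨g, hg⟩ := Monoid.exists_orderOf_eq_exponent (G := G) Monoid.ExponentExists.of_finite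
    haveI : NeZero (orderOf g) := ⟨(orderOf_pos g).ne'⟩
    exact ⟨hg ▸ hroot g, hg ▸ rootsOfUnity.isCyclic F (orderOf g)⟩
  set v : G → ((G →* Fˣ) → F) := fun g => fun χ : G →* Fˣ => ((χ g : Fˣ) : F) with hv
  -- the evaluation maps, as monoid homs on the character group
  let e : G → ((G →* Fˣ) →* F) := fun g =>
    { toFun := fun χ => ((χ g : Fˣ) : F)
      map_one' := by simp
      map_mul' := fun χ₁ χ₂ => by simp }
  have he : Function.Injective e := by
    intro g h hgh
    by_contra hne
    obtain ⟨φ, hφ⟩ := CommGroup.exists_apply_ne_one_of_hasEnoughRootsOfUnity G F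
      (a := g * h⁻¹) (by simpa [mul_inv_eq_one] using hne)
    apply hφ
    have : ((φ g : Fˣ) : F) = ((φ h : Fˣ) : F) := congrFun (congrArg (fun f => f.toFun) hgh) φ
    have h2 : φ g = φ h := Units.ext this
    rw [map_mul, map_inv, h2, mul_inv_cancel]
  have hLI : LinearIndependent F v :=
    (linearIndependent_monoidHom (G →* Fˣ) F).comp e he
  -- the map agrees with the linear combination map of the family v
  have hco : ⇑((MonoidAlgebra.lift F ((G →* Fˣ) → F) G)
        { toFun := fun g => fun χ : G →* Fˣ => ((χ g : Fˣ) : F)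
          map_one' := by funext χ; simp
          map_mul' := fun g h => by funext χ; simp }) =
      ⇑(Finsupp.linearCombination F v ∘ₗ (MonoidAlgebra.coeffLinearEquiv (S := F) (M := G) F).toLinearMap) := by
    funext x
    rw [MonoidAlgebra.lift_apply, LinearMap.comp_apply, Finsupp.linearCombination_apply]
    rfl
  rw [hco]
  have hinj : Function.Injective ⇑(Finsupp.linearCombination F v ∘ₗ (MonoidAlgebra.coeffLinearEquiv (S := F) (M := G) F).toLinearMap) :=
    show Function.Injective (⇑(Finsupp.linearCombination F v) ∘ ⇑(MonoidAlgebra.coeffLinearEquiv (S := F) (M := G) F)) from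
      Function.Injective.comp hLI (MonoidAlgebra.coeffLinearEquiv (S := F) (M := G) F).injective
  -- the character group is finite, with the same cardinality as G
  obtain ⟨eq⟩ := CommGroup.monoidHom_mulEquiv_of_hasEnoughRootsOfUnity G F
  haveI : Finite (G →* Fˣ) := Finite.of_equiv G eq.symm.toEquiv
  haveI : Fintype (G →* Fˣ) := Fintype.ofFinite _
  have hrank : Module.finrank F (MonoidAlgebra F G) = Module.finrank F ((G →* Fˣ) → F) := by
    rw [(MonoidAlgebra.coeffLinearEquiv (S := F) (M := G) F).finrank_eq, Module.finrank_finsupp_self, Module.finrank_pi]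
    exact (Fintype.card_congr eq.toEquiv).symm
  refine ⟨hinj, ?_⟩
  exact (LinearMap.injective_iff_surjective_of_finrank_eq_finrank hrank).mp hinj
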